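/- Assume ρ < 1 and let δ ∈ ℂ with 0 < |δ| ≤ ρ²/2. Then the kernel equation, regarded as a quadratic polynomial equation in γ, has exactly one root γ (counted with multiplicity) with |γ| < (4/5)|δ|, and that root is nonzero. -/

import Mathlib

/-- The load ρ = λ(ā²+a²)/(2λ̄āa). -/
noncomputable def rhoLoad (a lam : ℝ) : ℝ :=
  lam * ((1-a)^2 + a^2) / (2 * (1-lam) * (1-a) * a)

open Polynomial in
/-- The kernel equation as a quadratic polynomial in γ (for fixed δ). -/
noncomputable def kernelQuadG (a lam : ℝ) (d : ℂ) : Polynomial ℂ :=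
  C ((1-(lam:ℂ))*(1-(a:ℂ))*(a:ℂ)) * X^2
  + C ((1-(lam:ℂ))*(1-(a:ℂ))*(a:ℂ)*d^2
      - (1 - ((1-(lam:ℂ))*((1-(a:ℂ))^2+(a:ℂ)^2) + (lam:ℂ)*(a:ℂ)*(1-(a:ℂ)))) * d) * X
  + C ((lam:ℂ)*((a:ℂ)^2+(1-(a:ℂ))^2)*d^2 + (lam:ℂ)*(1-(a:ℂ))*(a:ℂ)*d^3)

set_option maxHeartbeats 800000

lemma aux1 (a lam s : ℝ) (ha : 0 < a) (ha1 : a < 1) (hl : 0 < lam)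
    (hs0 : 0 < s) (hs : s < 1/2) : lam*(1-a)*a*s < lam*(a^2+(1-a)^2) := by
  nlinarith [mul_nonneg hl.le (sq_nonneg (1-2*a)),
    mul_nonneg (mul_nonneg hl.le (by linarith : (0:ℝ) ≤ 1/2 - s))
      (mul_nonneg (by linarith : (0:ℝ) ≤ 1-a) ha.le)]

open Polynomial in
/-- assume ρ < 1 and 0 < |δ| ≤ ρ²/2. Then the kernel quadratic in γ
has exactly one root (with multiplicity) with |γ| < (4/5)|δ|, and it is nonzero. -/
theorem stmt9 (a lam : ℝ) (ha : 0 < a) (ha1 : a < 1) (hl : 0 < lam) (hl1 : lam < 1)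
    (hρ : rhoLoad a lam < 1)
    (d : ℂ) (hd0 : d ≠ 0) (hd1 : ‖d‖ ≤ (rhoLoad a lam)^2 / 2) :
    Multiset.card ((kernelQuadG a lam d).roots.filter
        (fun z => ‖z‖ < (4/5) * ‖d‖)) = 1 ∧
    ∀ z ∈ (kernelQuadG a lam d).roots, ‖z‖ < (4/5) * ‖d‖ → z ≠ 0 := by
  have ha1' : (0:ℝ) < 1 - a := by linarith
  have hl1' : (0:ℝ) < 1 - lam := by linarith
  set s : ℝ := ‖d‖ with hs_def
  have hs0 : 0 < s := norm_pos_iff.mpr hd0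
  have hρpos : 0 < rhoLoad a lam := by unfold rhoLoad; positivity
  have hs_half : s < 1/2 := by
    have h2 : rhoLoad a lam ^ 2 < 1 := by nlinarith
    calc s ≤ rhoLoad a lam ^ 2 / 2 := hd1
      _ < 1/2 := by linarith
  have hload : lam * ((1-a)^2 + a^2) < 2*(1-lam)*(1-a)*a := by
    have hden : (0:ℝ) < 2*(1-lam)*(1-a)*a := by positivity
    have h := hρ
    unfold rhoLoad at h
    exact (div_lt_one hden).mp h
  -- real constants
  set Ar : ℝ := (1-lam)*(1-a)*a with hAr_def
  set Mr : ℝ := lam*(a^2+(1-a)^2) + (2-lam)*(1-a)*a with hMr_def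
  set Sr : ℝ := lam*(a^2+(1-a)^2) with hSr_def
  set Tr : ℝ := lam*(1-a)*a with hTr_def
  have hArpos : 0 < Ar := by rw [hAr_def]; positivity
  have hMrpos : 0 < Mr := by rw [hMr_def]; nlinarith [sq_nonneg (1-2*a)]
  have hSrpos : 0 < Sr := by rw [hSr_def]; positivity
  have hTrpos : 0 < Tr := by rw [hTr_def]; positivity
  -- complex coefficients
  set A' : ℂ := ((Ar:ℝ):ℂ) with hA'_def
  set B' : ℂ := ((Ar:ℝ):ℂ)*d^2 - ((Mr:ℝ):ℂ)*d with hB'_def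
  set C' : ℂ := ((Sr:ℝ):ℂ)*d^2 + ((Tr:ℝ):ℂ)*d^3 with hC'_def
  have hA'ne : A' ≠ 0 := by
    rw [hA'_def]
    exact_mod_cast ne_of_gt hArpos
  have hq : kernelQuadG a lam d = C A' * X^2 + C B' * X + C C' := by
    unfold kernelQuadG
    rw [hA'_def, hB'_def, hC'_def, hAr_def, hMr_def, hSr_def, hTr_def]
    congr 1
    · congr 1
      · congr 1
        push_cast; ring
      · congr 1
        push_cast; ring
    · congr 1
      push_cast; ring
  rw [hq]
  set Q : Polynomial ℂ := C A' * X^2 + C B' * X + C C' with hQ_def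
  have hdeg : Q.natDegree = 2 := Polynomial.natDegree_quadratic hA'ne
  have hsplits : Q.Splits := IsAlgClosed.splits Q
  have hcard : Multiset.card Q.roots = 2 :=
    ((Polynomial.splits_iff_card_roots).mp hsplits).trans hdeg
  obtain ⟨u, v, huv⟩ := Multiset.card_eq_two.mp hcard
  have hlc : Q.leadingCoeff = A' := by
    rw [Polynomial.leadingCoeff, hdeg]
    simp [hQ_def, coeff_add, coeff_C_mul, coeff_X_pow, coeff_C]
  have hfac : Q = C A' * ((X - C u) * (X - C v)) := by
    have h := (Polynomial.C_leadingCoeff_mul_prod_multiset_X_sub_C (hcard.trans hdeg.symm)).symm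
    rw [huv, hlc] at h
    simpa using h
  have hfac2 : Q = C A' * X^2 - C (A'*(u+v)) * X + C (A'*(u*v)) := by
    rw [hfac]
    simp only [map_mul, map_add]
    ring
  have hfac3 : C A' * X^2 + C B' * X + C C'
      = C A' * X^2 - C (A'*(u+v)) * X + C (A'*(u*v)) := by
    rw [← hQ_def]; exact hfac2
  have e0 : C' = A'*(u*v) := by
    have h := congrArg (fun p => Polynomial.coeff p 0) hfac3
    simpa using h
  have e1 : B' = -(A'*(u+v)) := by
    have h := congrArg (fun p => Polynomial.coeff p 1) hfac3
    simpa using h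
  -- absolute values
  have habsA : ‖A'‖ = Ar := by
    rw [hA'_def, Complex.norm_real, Real.norm_eq_abs, abs_of_pos hArpos]
  set su : ℝ := ‖u‖ with hsu_def
  set sv : ℝ := ‖v‖ with hsv_def
  have habsC : ‖C'‖ = Ar * (su * sv) := by
    rw [e0, norm_mul, norm_mul, habsA]
  have habsB : ‖B'‖ = Ar * ‖u+v‖ := by
    rw [e1, norm_neg, norm_mul, habsA]
  -- key inequality
  set r : ℝ := 4/5 * s with hr_def
  have hr0 : 0 < r := by rw [hr_def]; linarith
  have hBlow : Mr * s - Ar * s^2 ≤ ‖B'‖ := by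
    have h1 : ‖((Mr:ℝ):ℂ)*d‖ - ‖((Ar:ℝ):ℂ)*d^2‖
        ≤ ‖((Mr:ℝ):ℂ)*d - ((Ar:ℝ):ℂ)*d^2‖ :=
      norm_sub_norm_le _ _
    have h2 : ‖((Mr:ℝ):ℂ)*d - ((Ar:ℝ):ℂ)*d^2‖ = ‖B'‖ := by
      rw [hB'_def, norm_sub_rev]
    rw [h2] at h1
    have h3 : ‖((Mr:ℝ):ℂ)*d‖ = Mr * s := by
      rw [norm_mul, Complex.norm_real, Real.norm_eq_abs, abs_of_pos hMrpos, hs_def]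
    have h4 : ‖((Ar:ℝ):ℂ)*d^2‖ = Ar * s^2 := by
      rw [norm_mul, norm_pow, Complex.norm_real, Real.norm_eq_abs, abs_of_pos hArpos, hs_def]
    rw [h3, h4] at h1
    exact h1
  have habsCup : ‖C'‖ ≤ Sr * s^2 + Tr * s^3 := by
    calc ‖C'‖ ≤ ‖((Sr:ℝ):ℂ)*d^2‖ + ‖((Tr:ℝ):ℂ)*d^3‖ := by
          rw [hC'_def]; exact norm_add_le _ _
      _ = Sr * s^2 + Tr * s^3 := by
          rw [norm_mul, norm_mul, norm_pow, norm_pow, Complex.norm_real, Real.norm_eq_abs, Complex.norm_real, Real.norm_eq_abs,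
            abs_of_pos hSrpos, abs_of_pos hTrpos, hs_def]
  have hkey : ‖A'‖ * r^2 + ‖C'‖ < ‖B'‖ * r := by
    have hK1 : a*(1-a)*(14/25) < 4/5*Mr - 16/25*Ar - Sr := by
      rw [hMr_def, hAr_def, hSr_def]
      nlinarith [mul_pos hl (mul_pos ha ha1'), hload]
    have hK2 : Tr + 4/5*Ar ≤ a*(1-a) := by
      rw [hTr_def, hAr_def]
      nlinarith [mul_nonneg (mul_nonneg hl1'.le ha.le) ha1'.le]
    have hs2 : (0:ℝ) < s^2 := by positivity
    have t1 : s^2 * (a*(1-a)*(14/25)) < s^2 * (4/5*Mr - 16/25*Ar - Sr) :=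
      (mul_lt_mul_iff_right₀ hs2).mpr hK1
    have t2 : s^3*(Tr + 4/5*Ar) ≤ s^3*(a*(1-a)) :=
      mul_le_mul_of_nonneg_left hK2 (by positivity)
    have t3 : s^3*(a*(1-a)) ≤ s^2*(1/2)*(a*(1-a)) := by
      have h : s^3 ≤ s^2*(1/2) := by nlinarith
      exact mul_le_mul_of_nonneg_right h (by positivity)
    have t4 : 0 < s^2 * (a*(1-a)) := by positivity
    have hmid : Ar * r^2 + (Sr * s^2 + Tr * s^3) < (Mr * s - Ar * s^2) * r := by
      rw [hr_def]
      nlinarith [t1, t2, t3, t4]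
    have h1 : (Mr * s - Ar * s^2) * r ≤ ‖B'‖ * r :=
      mul_le_mul_of_nonneg_right hBlow hr0.le
    rw [habsA]
    calc Ar * r^2 + ‖C'‖ ≤ Ar * r^2 + (Sr * s^2 + Tr * s^3) := by linarith [habsCup]
      _ < (Mr * s - Ar * s^2) * r := hmid
      _ ≤ ‖B'‖ * r := h1
  -- Vieta conclusion: (r - su)(r - sv) < 0
  have hsum : ‖u+v‖ ≤ su + sv := norm_add_le u v
  have hprod : (r - su) * (r - sv) < 0 := by
    have h1 : Ar * r^2 + Ar * (su*sv) < Ar * (su+sv) * r := by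
      calc Ar * r^2 + Ar * (su*sv) = ‖A'‖ * r^2 + ‖C'‖ := by
            rw [habsA, habsC]
        _ < ‖B'‖ * r := hkey
        _ = Ar * ‖u+v‖ * r := by rw [habsB]
        _ ≤ Ar * (su+sv) * r := by
            apply mul_le_mul_of_nonneg_right _ hr0.le
            exact mul_le_mul_of_nonneg_left hsum hArpos.le
    nlinarith [hArpos]
  have hsu0 : 0 ≤ su := norm_nonneg u
  have hsv0 : 0 ≤ sv := norm_nonneg v
  have hcases : (su < r ∧ r < sv) ∨ (sv < r ∧ r < su) := by
    rcases lt_trichotomy su r with h | h | h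
    · left
      refine ⟨h, ?_⟩
      by_contra hc
      push_neg at hc
      exact (not_le.mpr hprod) (mul_nonneg (by linarith) (by linarith))
    · exfalso; rw [h] at hprod; simp at hprod
    · right
      refine ⟨?_, h⟩
      by_contra hc
      push_neg at hc
      have hnn : (0:ℝ) ≤ (su - r)*(sv - r) := mul_nonneg (by linarith) (by linarith)
      have heqq : (su - r)*(sv - r) = (r - su)*(r - sv) := by ring
      exact (not_le.mpr hprod) (hnn.trans_eq heqq)
  have hroots : Q.roots = u ::ₘ {v} := huv
  have hC'ne : C' ≠ 0 := by
    intro h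
    have hd2 : d^2 ≠ 0 := pow_ne_zero _ hd0
    have h' : ((Sr:ℝ):ℂ) + ((Tr:ℝ):ℂ)*d = 0 := by
      have hfac' : d^2 * (((Sr:ℝ):ℂ) + ((Tr:ℝ):ℂ)*d) = 0 := by
        rw [hC'_def] at h
        linear_combination h
      rcases mul_eq_zero.mp hfac' with h'' | h''
      · exact absurd h'' hd2
      · exact h''
    have h2 : ((Sr:ℝ):ℂ) = -(((Tr:ℝ):ℂ)*d) := by linear_combination h'
    have h3 : Sr = Tr * s := by
      have := congrArg (fun x : ℂ => ‖x‖) h2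
      rwa [norm_neg, norm_mul, Complex.norm_real, Real.norm_eq_abs, Complex.norm_real, Real.norm_eq_abs,
        abs_of_pos hSrpos, abs_of_pos hTrpos, ← hs_def] at this
    rw [hSr_def, hTr_def] at h3
    exact absurd h3.symm (ne_of_lt (aux1 a lam s ha ha1 hl hs0 hs_half))
  constructor
  · rw [hroots]
    rcases hcases with ⟨h1, h2⟩ | ⟨h1, h2⟩
    · rw [Multiset.filter_cons, Multiset.filter_singleton,
        if_pos (show ‖u‖ < 4/5 * ‖d‖ from by rw [← hs_def, ← hr_def]; exact h1),
        if_neg (show ¬ ‖v‖ < 4/5 * ‖d‖ from by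
          rw [← hs_def, ← hr_def]; exact not_lt.mpr h2.le)]
      simp
    · rw [Multiset.filter_cons, Multiset.filter_singleton,
        if_neg (show ¬ ‖u‖ < 4/5 * ‖d‖ from by
          rw [← hs_def, ← hr_def]; exact not_lt.mpr h2.le),
        if_pos (show ‖v‖ < 4/5 * ‖d‖ from by rw [← hs_def, ← hr_def]; exact h1)]
      simp
  · intro z hz _ hz0
    subst hz0
    have hQne : Q ≠ 0 := by
      intro h0
      rw [h0] at hdeg
      simp at hdeg
    have : Q.IsRoot 0 := Polynomial.isRoot_of_mem_roots hz
    rw [Polynomial.IsRoot, hQ_def] at this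
    simp at this
    exact hC'ne this
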